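/- Special insertion preserves secondary dinv (Claim 3.2): Let A ⊂ ℤ be a nonempty finite set, let f be a parking function on A with secdinv(f) = 0, let x ∈ ℤ with x ∉ A, and let c, d be positive integers with c, d ≤ |A| such that (1) d = maxdiag(f) and every label y ∈ A with col_f(y) > c satisfies diag_f(y) < d, and (2) there is a label z ∈ A with col_f(z) = c and diag_f(z) = d which is the topmost label of column c (no label w has col_f(w) = c and row_f(w) > row_f(z)). Then the (c,d)-insertion h of x into f is a parking function on A ∪ {x} with secdinv(h) = secdinv(f) = 0 and diag_h(x) = d. -/
import Mathlib


/-!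
Parking functions on a finite set of integer labels `A ⊆ ℤ`.
A parking function on `A` (with `|A| = m`) is encoded as a function `f : ℤ → ℕ`
which is `0` off `A`, takes values in `{1,…,m}` on `A`, and satisfies the
parking condition: for every `1 ≤ k ≤ m`, `|{a ∈ A : f a ≤ k}| ≥ k`.
-/

/-- The row of label `a`: the number of labels in strictly smaller columns, plus
the number of labels in the same column that are `≤ a`. -/
def pfRow (A : Finset ℤ) (f : ℤ → ℕ) (a : ℤ) : ℕ :=
  (A.filter fun b => f b < f a).card + (A.filter fun b => f b = f a ∧ b ≤ a).card

/-- The diagonal of label `a`: its row minus its column (the column of `a` is `f a`). -/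
def pfDiag (A : Finset ℤ) (f : ℤ → ℕ) (a : ℤ) : ℤ :=
  (pfRow A f a : ℤ) - (f a : ℤ)

/-- `f : ℤ → ℕ` encodes a parking function on the finite label set `A ⊆ ℤ`. -/
def IsParkingOn (A : Finset ℤ) (f : ℤ → ℕ) : Prop :=
  (∀ a ∈ A, 1 ≤ f a ∧ f a ≤ A.card) ∧
  (∀ a, a ∉ A → f a = 0) ∧
  ∀ k : ℕ, 1 ≤ k → k ≤ A.card → k ≤ (A.filter fun a => f a ≤ k).card

/-- The number of secondary dinv pairs `(a, b)`: pairs with `a < b`,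
`diag a = diag b - 1` and `col a > col b`. -/
def secdinv (A : Finset ℤ) (f : ℤ → ℕ) : ℕ :=
  ((A ×ˢ A).filter fun p =>
    p.1 < p.2 ∧ pfDiag A f p.1 = pfDiag A f p.2 - 1 ∧ f p.2 < f p.1).card

/-- The set of parking functions on `A` with zero secondary dinv. -/
def PFZ (A : Finset ℤ) : Set (ℤ → ℕ) :=
  {f | IsParkingOn A f ∧ secdinv A f = 0}

/-- `pfz n`: the number of parking functions of length `n` (on `{1,…,n}`)
with zero secondary dinv. -/
noncomputable def pfz (n : ℕ) : ℕ := Nat.card (PFZ (Finset.Icc 1 (n : ℤ)))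

/-- Insertion `Γ(f, x, k)` of a new label `x` into `f` at column `k`:
`x` gets column `k`; labels in columns `< k` (or in column `k` and smaller
than `x`) keep their column; the others shift one column to the right. -/
def insertPF (f : ℤ → ℕ) (x : ℤ) (k : ℕ) : ℤ → ℕ := fun a =>
  if a = x then k
  else if f a < k ∨ (f a = k ∧ a < x) then f a
  else f a + 1

/-- The `(c,d)`-insertion of `x ∉ A` into a parking function `f` on `A`:
among the labels `y ∈ A` on diagonal `d - 1` with column `> c` and `y < x`
(these are `y_1, …, y_{ℓ*}` in the paper's notation), take the one with the
largest column; insert `x` at that column (i.e. `Γ(f, x, col(y_{ℓ*}))`), or at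
column `c + 1` if there is no such label (`ℓ* = 0`). -/
def specialInsert (A : Finset ℤ) (f : ℤ → ℕ) (x : ℤ) (c : ℕ) (d : ℤ) : ℤ → ℕ :=
  let T := A.filter fun y => pfDiag A f y = d - 1 ∧ c < f y ∧ y < x
  insertPF f x (if T.Nonempty then T.sup f else c + 1)

section Helpers

variable (A : Finset ℤ) (f : ℤ → ℕ) (x : ℤ) (k : ℕ)

lemma ip_self : insertPF f x k x = k := by simp [insertPF]

lemma ip_of_ne (a : ℤ) (h : a ≠ x) :
    insertPF f x k a = if f a < k ∨ (f a = k ∧ a < x) then f a else f a + 1 := by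
  simp [insertPF, h]

lemma ip_ge (a : ℤ) (h : a ≠ x) :
    f a ≤ insertPF f x k a ∧ insertPF f x k a ≤ f a + 1 := by
  rw [ip_of_ne f x k a h]; split_ifs <;> omega

lemma ip_le_k (a : ℤ) (h : a ≠ x) (h1 : f a ≤ k) (h2 : a < x) :
    insertPF f x k a ≤ k := by
  rw [ip_of_ne f x k a h]; split_ifs <;> omega

lemma ip_ord (a b : ℤ) (ha : a ≠ x) (hb : b ≠ x) :
    (insertPF f x k b < insertPF f x k a ∨
      (insertPF f x k b = insertPF f x k a ∧ b ≤ a)) ↔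
    (f b < f a ∨ (f b = f a ∧ b ≤ a)) := by
  rw [ip_of_ne f x k a ha, ip_of_ne f x k b hb]
  split_ifs with h1 h2 h2 <;> omega

lemma ip_lt (a b : ℤ) (ha : a ≠ x) (hb : b ≠ x) (h1 : a < b)
    (h2 : insertPF f x k b < insertPF f x k a) : f b < f a := by
  rw [ip_of_ne f x k a ha, ip_of_ne f x k b hb] at h2
  split_ifs at h2 <;> omega

lemma ip_row_x_pt (b : ℤ) (hb : b ≠ x) :
    (insertPF f x k b < k ∨ (insertPF f x k b = k ∧ b ≤ x)) ↔
    (f b < k ∨ (f b = k ∧ b < x)) := by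
  rw [ip_of_ne f x k b hb]
  split_ifs with h1 <;> omega

lemma row_split (S : Finset ℤ) (g : ℤ → ℕ) (a : ℤ) :
    pfRow S g a = (S.filter fun b => g b < g a ∨ (g b = g a ∧ b ≤ a)).card := by
  have hdisj : Disjoint (S.filter fun b => g b < g a)
      (S.filter fun b => g b = g a ∧ b ≤ a) := by
    rw [Finset.disjoint_left]
    intro b hb hb'
    simp only [Finset.mem_filter] at hb hb'
    omega
  rw [pfRow, Finset.filter_or, Finset.card_union_of_disjoint hdisj]

lemma diag_insert_mem (hx : x ∉ A) (a : ℤ) (ha : a ∈ A) :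
    pfDiag (insert x A) (insertPF f x k) a = pfDiag A f a := by
  have hax : a ≠ x := fun h => hx (h ▸ ha)
  have hxn : x ∉ A.filter fun b =>
      insertPF f x k b < insertPF f x k a ∨
        (insertPF f x k b = insertPF f x k a ∧ b ≤ a) :=
    fun h => hx (Finset.mem_filter.1 h).1
  have hfeq : (A.filter fun b =>
      insertPF f x k b < insertPF f x k a ∨
        (insertPF f x k b = insertPF f x k a ∧ b ≤ a))
      = A.filter fun b => f b < f a ∨ (f b = f a ∧ b ≤ a) :=
    Finset.filter_congr fun b hb =>
      ip_ord f x k a b hax (fun h => hx (h ▸ hb))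
  have hipa := ip_of_ne f x k a hax
  have hipx := ip_self f x k
  by_cases hs : f a < k ∨ (f a = k ∧ a < x)
  · rw [if_pos hs] at hipa
    have hPx : ¬ (insertPF f x k x < insertPF f x k a ∨
        (insertPF f x k x = insertPF f x k a ∧ x ≤ a)) := by
      rw [hipx, hipa]
      have : a ≠ x := hax
      omega
    have hrow : pfRow (insert x A) (insertPF f x k) a = pfRow A f a := by
      rw [row_split, Finset.filter_insert, if_neg hPx, hfeq, ← row_split]
    rw [pfDiag, pfDiag, hrow, hipa]
  · rw [if_neg hs] at hipa
    have hPx : insertPF f x k x < insertPF f x k a ∨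
        (insertPF f x k x = insertPF f x k a ∧ x ≤ a) := by
      rw [hipx, hipa]; omega
    have hrow : pfRow (insert x A) (insertPF f x k) a = pfRow A f a + 1 := by
      rw [row_split, Finset.filter_insert, if_pos hPx,
        Finset.card_insert_of_notMem hxn, hfeq, ← row_split]
    rw [pfDiag, pfDiag, hrow, hipa]
    push_cast
    ring

lemma row_insert_x (hx : x ∉ A) :
    pfRow (insert x A) (insertPF f x k) x
      = (A.filter fun b => f b < k ∨ (f b = k ∧ b < x)).card + 1 := by
  have hxn : x ∉ A.filter fun b =>
      insertPF f x k b < insertPF f x k x ∨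
        (insertPF f x k b = insertPF f x k x ∧ b ≤ x) :=
    fun h => hx (Finset.mem_filter.1 h).1
  have hPx : insertPF f x k x < insertPF f x k x ∨
      (insertPF f x k x = insertPF f x k x ∧ x ≤ x) := Or.inr ⟨rfl, le_refl x⟩
  have he : (A.filter fun b =>
      insertPF f x k b < insertPF f x k x ∨
        (insertPF f x k b = insertPF f x k x ∧ b ≤ x))
      = A.filter fun b => f b < k ∨ (f b = k ∧ b < x) :=
    Finset.filter_congr fun b hb => by
      rw [ip_self]
      exact ip_row_x_pt f x k b (fun h => hx (h ▸ hb))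
  rw [row_split, Finset.filter_insert, if_pos hPx,
    Finset.card_insert_of_notMem hxn, he]

lemma row_lt_of_gt (b y : ℤ) (hb : b ∈ A) (hcol : f b = f y) (hlt : y < b) :
    pfRow A f y < pfRow A f b := by
  have h1 : (A.filter fun w => f w < f y).card = (A.filter fun w => f w < f b).card := by
    congr 1
    exact Finset.filter_congr fun w _ => by rw [hcol]
  have hsub : (A.filter fun w => f w = f y ∧ w ≤ y)
      ⊆ A.filter fun w => f w = f b ∧ w ≤ b := by
    intro w hw
    simp only [Finset.mem_filter] at hw ⊢
    exact ⟨hw.1, hcol ▸ hw.2.1, le_trans hw.2.2 (le_of_lt hlt)⟩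
  have hmem : b ∈ A.filter fun w => f w = f b ∧ w ≤ b :=
    Finset.mem_filter.2 ⟨hb, rfl, le_refl b⟩
  have hnmem : b ∉ A.filter fun w => f w = f y ∧ w ≤ y := by
    intro h
    simp only [Finset.mem_filter] at h
    omega
  have h2 := Finset.card_lt_card
    ((Finset.ssubset_iff_of_subset hsub).2 ⟨b, hmem, hnmem⟩)
  rw [pfRow, pfRow]
  omega

lemma insert_parking (hx : x ∉ A) (hpf : IsParkingOn A f)
    (hk1 : 1 ≤ k) (hk2 : k ≤ A.card + 1) :
    IsParkingOn (insert x A) (insertPF f x k) := by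
  have hcard : (insert x A).card = A.card + 1 := Finset.card_insert_of_notMem hx
  have hpark : ∀ j, j ≤ A.card → j ≤ (A.filter fun a => f a ≤ j).card := by
    intro j hj
    rcases Nat.eq_zero_or_pos j with hj0 | hj0
    · omega
    · exact hpf.2.2 j hj0 hj
  refine ⟨?_, ?_, ?_⟩
  · intro a ha
    rw [hcard]
    rcases Finset.mem_insert.1 ha with rfl | ha
    · rw [ip_self]; omega
    · have hax : a ≠ x := fun h => hx (h ▸ ha)
      have := ip_ge f x k a hax
      have := (hpf.1 a ha)
      omega
  · intro a ha
    have hax : a ≠ x := fun h => ha (h ▸ Finset.mem_insert_self x A)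
    have haA : a ∉ A := fun h => ha (Finset.mem_insert_of_mem h)
    have h0 : f a = 0 := hpf.2.1 a haA
    rw [ip_of_ne f x k a hax, if_pos (Or.inl (by omega))]
    exact h0
  · intro k' h1 h2
    rw [hcard] at h2
    by_cases hkk : k' < k
    · have hsub : (A.filter fun a => f a ≤ k')
          ⊆ (insert x A).filter fun a => insertPF f x k a ≤ k' := by
        intro a ha
        simp only [Finset.mem_filter] at ha ⊢
        refine ⟨Finset.mem_insert_of_mem ha.1, ?_⟩
        have hax : a ≠ x := fun h => hx (h ▸ ha.1)
        rw [ip_of_ne f x k a hax, if_pos (Or.inl (by omega))]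
        exact ha.2
      have hk' : k' ≤ A.card := by omega
      exact le_trans (hpark k' hk') (Finset.card_le_card hsub)
    · have hsub : insert x (A.filter fun a => f a ≤ k' - 1)
          ⊆ (insert x A).filter fun a => insertPF f x k a ≤ k' := by
        intro a ha
        rcases Finset.mem_insert.1 ha with rfl | ha
        · exact Finset.mem_filter.2 ⟨Finset.mem_insert_self _ _,
            by rw [ip_self]; omega⟩
        · simp only [Finset.mem_filter] at ha ⊢
          refine ⟨Finset.mem_insert_of_mem ha.1, ?_⟩
          have hax : a ≠ x := fun h => hx (h ▸ ha.1)
          have := ip_ge f x k a hax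
          omega
      have hxn : x ∉ A.filter fun a => f a ≤ k' - 1 :=
        fun h => hx (Finset.mem_filter.1 h).1
      have hc := Finset.card_le_card hsub
      rw [Finset.card_insert_of_notMem hxn] at hc
      have := hpark (k' - 1) (by omega)
      omega

end Helpers


/-- Claim 3.2: special insertion preserves (zero) secondary dinv.
If `f` is a parking function on a nonempty `A` with `secdinv f = 0`, `x ∉ A`,
and `c, d` are positive integers `≤ |A|` such that
(1) `d = maxdiag f` and every label in a column `> c` has diagonal `< d`, and
(2) some label `z` lies in column `c` on diagonal `d` and is topmost in its column,
then the `(c,d)`-insertion `h` of `x` into `f` is a parking function on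
`A ∪ {x}` with `secdinv h = secdinv f = 0` and `diag_h x = d`. -/
theorem specialInsert_secdinv (A : Finset ℤ) (hA : A.Nonempty) (f : ℤ → ℕ)
    (hpf : IsParkingOn A f) (hsd : secdinv A f = 0)
    (x : ℤ) (hx : x ∉ A) (c d : ℕ)
    (hc1 : 1 ≤ c) (hd1 : 1 ≤ d) (hcA : c ≤ A.card) (hdA : d ≤ A.card)
    (hdmax : (∀ a ∈ A, pfDiag A f a ≤ (d : ℤ)) ∧ ∃ a ∈ A, pfDiag A f a = (d : ℤ))
    (hright : ∀ y ∈ A, c < f y → pfDiag A f y < (d : ℤ))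
    (hcol : ∃ z ∈ A, f z = c ∧ pfDiag A f z = (d : ℤ) ∧
      ∀ w ∈ A, f w = c → pfRow A f w ≤ pfRow A f z) :
    IsParkingOn (insert x A) (specialInsert A f x c (d : ℤ)) ∧
      secdinv (insert x A) (specialInsert A f x c (d : ℤ)) = secdinv A f ∧
      secdinv (insert x A) (specialInsert A f x c (d : ℤ)) = 0 ∧
      pfDiag (insert x A) (specialInsert A f x c (d : ℤ)) x = (d : ℤ) := by

  obtain ⟨z, hzA, hzc, hzd, hztop⟩ := hcol
  set T : Finset ℤ :=
    A.filter (fun y => pfDiag A f y = (d : ℤ) - 1 ∧ c < f y ∧ y < x) with hTdef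
  set K : ℕ := if T.Nonempty then T.sup f else c + 1 with hKdef
  have hSI : specialInsert A f x c (d : ℤ) = insertPF f x K := rfl
  -- z is the largest label in column c
  have hzmax : ∀ w ∈ A, f w = c → w ≤ z := by
    intro w hw hwc
    by_contra hlt
    push_neg at hlt
    have h1 := row_lt_of_gt A f w z hw (by rw [hwc, hzc]) hlt
    have h2 := hztop w hw hwc
    omega
  have hrowz : (pfRow A f z : ℤ) = c + d := by
    rw [pfDiag, hzc] at hzd
    omega
  have hle_c_card : ((A.filter fun b => f b ≤ c).card : ℤ) = c + d := by
    have h1 : pfRow A f z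
        = (A.filter fun b => f b < f z ∨ (f b = f z ∧ b ≤ z)).card :=
      row_split A f z
    have h2 : (A.filter fun b => f b < f z ∨ (f b = f z ∧ b ≤ z))
        = A.filter fun b => f b ≤ c :=
      Finset.filter_congr fun b hb => by
        rw [hzc]
        constructor
        · intro h; omega
        · intro h
          rcases Nat.lt_or_ge (f b) c with h' | h'
          · exact Or.inl h'
          · have hbc : f b = c := by omega
            exact Or.inr ⟨hbc, hzmax b hb hbc⟩
    rw [h2] at h1
    rw [← h1]
    exact hrowz
  -- column c+1 is empty
  have hnoc1 : ∀ b ∈ A, f b ≠ c + 1 := by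
    intro b hb hbc
    have hsub : insert b (A.filter fun w => f w ≤ c)
        ⊆ A.filter fun w => f w < f b ∨ (f w = f b ∧ w ≤ b) := by
      intro w hw
      rcases Finset.mem_insert.1 hw with rfl | hw
      · exact Finset.mem_filter.2 ⟨hb, Or.inr ⟨rfl, le_refl w⟩⟩
      · simp only [Finset.mem_filter] at hw ⊢
        exact ⟨hw.1, Or.inl (by omega)⟩
    have hbn : b ∉ A.filter fun w => f w ≤ c := by
      intro h
      have := (Finset.mem_filter.1 h).2
      omega
    have hc1 := Finset.card_le_card hsub
    rw [Finset.card_insert_of_notMem hbn] at hc1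
    have hrs := row_split A f b
    have hd2 := hright b hb (by omega)
    rw [pfDiag] at hd2
    omega
  -- the key quadruple of facts about K
  have key : 1 ≤ K ∧ K ≤ A.card + 1 ∧
      (((A.filter fun b => f b < K ∨ (f b = K ∧ b < x)).card : ℤ) + 1 = K + d) ∧
      (∀ a ∈ A, a < x → pfDiag A f a = (d : ℤ) - 1 → insertPF f x K a ≤ K) := by
    by_cases hTne : T.Nonempty
    · obtain ⟨y, hyT, hysup⟩ := Finset.exists_mem_eq_sup T hTne f
      have hymem := Finset.mem_filter.1 hyT
      have hyA : y ∈ A := hymem.1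
      have hyd : pfDiag A f y = (d : ℤ) - 1 := hymem.2.1
      have hyc : c < f y := hymem.2.2.1
      have hyx : y < x := hymem.2.2.2
      have hKy : K = f y := by rw [hKdef, if_pos hTne, hysup]
      have hclaim : ∀ b ∈ A, f b = K → (b < x ↔ b ≤ y) := by
        intro b hb hbK
        constructor
        · intro hbx
          by_contra hby
          push_neg at hby
          have hrlt := row_lt_of_gt A f b y hb (by rw [hbK, hKy]) hby
          have hd2 := hright b hb (by omega)
          rw [pfDiag] at hd2
          rw [pfDiag] at hyd
          omega
        · intro hby
          exact lt_of_le_of_lt hby hyx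
      have hfe : (A.filter fun b => f b < K ∨ (f b = K ∧ b < x))
          = A.filter fun b => f b < f y ∨ (f b = f y ∧ b ≤ y) :=
        Finset.filter_congr fun b hb => by
          rw [← hKy]
          constructor
          · rintro (h | ⟨h1, h2⟩)
            · exact Or.inl h
            · exact Or.inr ⟨h1, (hclaim b hb h1).1 h2⟩
          · rintro (h | ⟨h1, h2⟩)
            · exact Or.inl h
            · exact Or.inr ⟨h1, (hclaim b hb h1).2 h2⟩
      have hKb := hpf.1 y hyA
      refine ⟨by omega, by omega, ?_, ?_⟩
      · rw [hfe, ← row_split]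
        rw [pfDiag] at hyd
        rw [hKy]
        omega
      · intro a ha hax had
        have hane : a ≠ x := fun h => hx (h ▸ ha)
        refine ip_le_k f x K a hane ?_ hax
        rcases Nat.lt_or_ge c (f a) with h | h
        · have haT : a ∈ T := Finset.mem_filter.2 ⟨ha, had, h, hax⟩
          rw [hKy, ← hysup]
          exact Finset.le_sup haT
        · rw [hKy]; omega
    · have hKc : K = c + 1 := by rw [hKdef, if_neg hTne]
      have hTe : T = ∅ := Finset.not_nonempty_iff_eq_empty.1 hTne
      have hfe : (A.filter fun b => f b < K ∨ (f b = K ∧ b < x))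
          = A.filter fun b => f b ≤ c :=
        Finset.filter_congr fun b hb => by
          have := hnoc1 b hb
          rw [hKc]
          omega
      refine ⟨by omega, by omega, ?_, ?_⟩
      · rw [hfe, hKc]
        push_cast
        omega
      · intro a ha hax had
        have hane : a ≠ x := fun h => hx (h ▸ ha)
        have hfa : f a ≤ c := by
          by_contra h
          push_neg at h
          have haT : a ∈ T := Finset.mem_filter.2 ⟨ha, had, h, hax⟩
          rw [hTe] at haT
          exact absurd haT (Finset.notMem_empty a)
        exact ip_le_k f x K a hane (by omega) hax
  obtain ⟨hk1, hk2, Hrow, Hblock⟩ := key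
  rw [hSI]
  have hdx : pfDiag (insert x A) (insertPF f x K) x = (d : ℤ) := by
    rw [pfDiag, row_insert_x A f x K hx, ip_self]
    push_cast
    omega
  have hf0 : ∀ a b : ℤ, a ∈ A → b ∈ A → a < b → pfDiag A f a = pfDiag A f b - 1 →
      f b < f a → False := by
    intro a b ha hb h1 h2 h3
    have hm : (a, b) ∈ (A ×ˢ A).filter fun p =>
        p.1 < p.2 ∧ pfDiag A f p.1 = pfDiag A f p.2 - 1 ∧ f p.2 < f p.1 :=
      Finset.mem_filter.2 ⟨Finset.mem_product.2 ⟨ha, hb⟩, h1, h2, h3⟩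
    rw [secdinv, Finset.card_eq_zero] at hsd
    rw [hsd] at hm
    exact absurd hm (Finset.notMem_empty _)
  have hs0 : secdinv (insert x A) (insertPF f x K) = 0 := by
    rw [secdinv, Finset.card_eq_zero, Finset.filter_eq_empty_iff]
    rintro ⟨a, b⟩ hm ⟨h1, h2, h3⟩
    dsimp only at h1 h2 h3
    simp only [Finset.mem_product, Finset.mem_insert] at hm
    obtain ⟨ha, hb⟩ := hm
    rcases ha with rfl | ha <;> rcases hb with rfl | hb
    · exact absurd h1 (lt_irrefl _)
    · rw [hdx, diag_insert_mem A f a K hx b hb] at h2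
      have := hdmax.1 b hb
      omega
    · rw [diag_insert_mem A f b K hx a ha, hdx] at h2
      rw [ip_self] at h3
      have := Hblock a ha h1 h2
      omega
    · have hane : a ≠ x := fun h => hx (h ▸ ha)
      have hbne : b ≠ x := fun h => hx (h ▸ hb)
      have hfb := ip_lt f x K a b hane hbne h1 h3
      rw [diag_insert_mem A f x K hx a ha, diag_insert_mem A f x K hx b hb] at h2
      exact hf0 a b ha hb h1 h2 hfb
  exact ⟨insert_parking A f x K hx hpf hk1 hk2, by rw [hsd]; exact hs0, hs0, hdx⟩
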